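/- arXiv:2112.13045 — 2 statements merged into one kernel-verified Lean document; each statement's English description precedes it below -/
import Mathlib

section
/- Let n, r ≥ 1 and let a, b, a', b' : Fin n → Fin r be functions. Then Σ_{w ∈ Fin n} x_{a(w)}·x_{b(w)} = Σ_{w ∈ Fin n} x_{a'(w)}·x_{b'(w)} in the free noncommutative algebra over ℤ on generators x₁,…,x_r if and only if Σ_{w ∈ Fin n} y_{a(w)}·z_{b(w)} = Σ_{w ∈ Fin n} y_{a'(w)}·z_{b'(w)} in the commutative polynomial ring ℤ[y₁,…,y_r, z₁,…,z_r]. -/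
open Finset

lemma count_iff {α β : Type*} [DecidableEq α] [DecidableEq β] {n : ℕ}
    (e : β → α) (he : Function.Injective e) (g g' : Fin n → β) :
    (∀ x : α, (univ.filter (fun w => e (g w) = x)).card
        = (univ.filter (fun w => e (g' w) = x)).card)
      ↔ ∀ p : β, (univ.filter (fun w => g w = p)).card
        = (univ.filter (fun w => g' w = p)).card := by
  constructor
  · intro h p
    simpa [he.eq_iff] using h (e p)
  · intro h x
    by_cases hx : ∃ p, e p = x
    · obtain ⟨p, rfl⟩ := hx
      simpa [he.eq_iff] using h p
    · push_neg at hx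
      rw [Finset.filter_false_of_mem, Finset.filter_false_of_mem] <;>
        intro w _ <;> exact hx _

lemma single_sum_eq_iff {α : Type*} [DecidableEq α] {n : ℕ} (g g' : Fin n → α) :
    ((∑ w : Fin n, Finsupp.single (g w) (1:ℤ)) = ∑ w : Fin n, Finsupp.single (g' w) 1)
      ↔ ∀ x, (univ.filter (fun w => g w = x)).card = (univ.filter (fun w => g' w = x)).card := by
  rw [Finsupp.ext_iff]
  apply forall_congr'
  intro x
  rw [Finsupp.finset_sum_apply, Finsupp.finset_sum_apply]
  have h : ∀ (g : Fin n → α), (∑ w : Fin n, Finsupp.single (g w) (1:ℤ) x)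
      = ((univ.filter (fun w => g w = x)).card : ℤ) := by
    intro g
    simp [Finsupp.single_apply, Finset.sum_boole]
  rw [h, h, Int.natCast_inj]

lemma mv_sum_eq_iff {σ : Type*} [DecidableEq σ] {n : ℕ} (g g' : Fin n → (σ →₀ ℕ)) :
    ((∑ w : Fin n, MvPolynomial.monomial (g w) (1:ℤ)) = ∑ w : Fin n, MvPolynomial.monomial (g' w) 1)
      ↔ ∀ m, (univ.filter (fun w => g w = m)).card = (univ.filter (fun w => g' w = m)).card := by
  rw [MvPolynomial.ext_iff]
  apply forall_congr'
  intro m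
  rw [MvPolynomial.coeff_sum, MvPolynomial.coeff_sum]
  have h : ∀ (g : Fin n → (σ →₀ ℕ)),
      (∑ w : Fin n, MvPolynomial.coeff m (MvPolynomial.monomial (g w) (1:ℤ)))
      = ((univ.filter (fun w => g w = m)).card : ℤ) := by
    intro g
    simp [MvPolynomial.coeff_monomial, Finset.sum_boole]
  rw [h, h, Int.natCast_inj]


/-- Replacing the noncommutative variables `x_i` in the Weisfeiler–Leman matrix product by
disjoint "left" and "right" commuting variables `y_i`, `z_j` does not change which entries are
equal: `Σ_w x_{a w} * x_{b w} = Σ_w x_{a' w} * x_{b' w}` in the free algebra `ℤ⟨x₁,…,x_r⟩`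
iff `Σ_w y_{a w} * z_{b w} = Σ_w y_{a' w} * z_{b' w}` in `ℤ[y₁,…,y_r, z₁,…,z_r]`. -/
theorem free_vs_commutative_sum_prod (n r : ℕ) (hn : 1 ≤ n) (hr : 1 ≤ r)
    (a b a' b' : Fin n → Fin r) :
    (∑ w : Fin n, FreeAlgebra.ι ℤ (a w) * FreeAlgebra.ι ℤ (b w)
        = ∑ w : Fin n, FreeAlgebra.ι ℤ (a' w) * FreeAlgebra.ι ℤ (b' w))
      ↔ (∑ w : Fin n, (MvPolynomial.X (Sum.inl (a w)) * MvPolynomial.X (Sum.inr (b w)) :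
            MvPolynomial (Fin r ⊕ Fin r) ℤ)
          = ∑ w : Fin n, MvPolynomial.X (Sum.inl (a' w)) * MvPolynomial.X (Sum.inr (b' w))) := by
  classical
  set g : Fin n → Fin r × Fin r := fun w => (a w, b w) with hg
  set g' : Fin n → Fin r × Fin r := fun w => (a' w, b' w) with hg'
  -- injectivity of the word map
  have eW : Function.Injective (fun p : Fin r × Fin r => FreeMonoid.of p.1 * FreeMonoid.of p.2) := by
    intro p q h
    have : ([p.1, p.2] : List (Fin r)) = [q.1, q.2] := h
    simp at this
    exact Prod.ext this.1 this.2
  -- injectivity of the monomial-exponent map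
  have eM : Function.Injective (fun p : Fin r × Fin r =>
      Finsupp.single (Sum.inl p.1 : Fin r ⊕ Fin r) 1 + Finsupp.single (Sum.inr p.2) 1) := by
    intro p q h
    have h1 := DFunLike.congr_fun h (Sum.inl p.1)
    have h2 := DFunLike.congr_fun h (Sum.inr p.2)
    simp [Finsupp.single_apply] at h1 h2
    by_cases hq1 : q.1 = p.1
    · by_cases hq2 : q.2 = p.2
      · exact Prod.ext hq1.symm hq2.symm
      · simp [hq2] at h2
    · simp [hq1] at h1
  -- free algebra side
  let ψ := FreeAlgebra.equivMonoidAlgebraFreeMonoid (R := ℤ) (X := Fin r)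
  have hι : ∀ i : Fin r, ψ (FreeAlgebra.ι ℤ i)
      = MonoidAlgebra.single (FreeMonoid.of i) (1:ℤ) := by
    intro i
    simp [ψ, FreeAlgebra.equivMonoidAlgebraFreeMonoid, MonoidAlgebra.of_apply]
  have H1 : (∑ w : Fin n, FreeAlgebra.ι ℤ (a w) * FreeAlgebra.ι ℤ (b w)
        = ∑ w : Fin n, FreeAlgebra.ι ℤ (a' w) * FreeAlgebra.ι ℤ (b' w))
      ↔ ∀ p : Fin r × Fin r, (univ.filter (fun w => g w = p)).card
          = (univ.filter (fun w => g' w = p)).card := by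
    rw [← ψ.injective.eq_iff, map_sum, map_sum]
    simp only [map_mul, hι, MonoidAlgebra.single_mul_single, one_mul]
    simp only [← MonoidAlgebra.ofCoeff_single, ← MonoidAlgebra.ofCoeff_sum, MonoidAlgebra.ofCoeff_inj]
    exact (single_sum_eq_iff _ _).trans (count_iff _ eW g g')
  -- commutative side
  have hX : ∀ i j : Fin r, (MvPolynomial.X (Sum.inl i) * MvPolynomial.X (Sum.inr j) :
      MvPolynomial (Fin r ⊕ Fin r) ℤ)
      = MvPolynomial.monomial (Finsupp.single (Sum.inl i) 1 + Finsupp.single (Sum.inr j) 1) 1 := by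
    intro i j
    rw [MvPolynomial.X, MvPolynomial.X, MvPolynomial.monomial_mul, one_mul]
  have H2 : (∑ w : Fin n, (MvPolynomial.X (Sum.inl (a w)) * MvPolynomial.X (Sum.inr (b w)) :
            MvPolynomial (Fin r ⊕ Fin r) ℤ)
          = ∑ w : Fin n, MvPolynomial.X (Sum.inl (a' w)) * MvPolynomial.X (Sum.inr (b' w)))
      ↔ ∀ p : Fin r × Fin r, (univ.filter (fun w => g w = p)).card
          = (univ.filter (fun w => g' w = p)).card := by
    simp only [hX]
    exact (mv_sum_eq_iff _ _).trans (count_iff _ eM g g')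
  exact H1.trans H2.symm
end

section
/- Let n, r, m ≥ 1 be integers and let c : Fin n × Fin n → Fin r be a coloring. Suppose (u,v) and (u',v') are two pairs such that the multiset over w ∈ Fin n of pairs (c(u,w), c(w,v)) differs from the multiset over w of pairs (c(u',w), c(w,v')). Then the number of pairs of functions (χ, ψ), where χ, ψ : Fin r → {1,…,m} ⊆ ℤ, satisfying Σ_{w ∈ Fin n} χ(c(u,w))·ψ(c(w,v)) = Σ_{w ∈ Fin n} χ(c(u',w))·ψ(c(w,v')) is at most 2·m^{2r−1}. Equivalently, if χ and ψ are chosen independently and uniformly at random among all functions Fin r → {1,…,m}, the probability that these two sums coincide is at most 2/m. -/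
open Finset

lemma icc_card (m : ℕ) : (Finset.Icc (1 : ℤ) m).card = m := by
  rw [Int.card_Icc]; simp

/-- Linear counting lemma: a nontrivial linear equation over `{1,…,m}^r` has at most
`m^(r-1)` solutions. -/
lemma lin_count (r m : ℕ) (b : Fin r → ℤ) (t : ℤ) (j₀ : Fin r) (hb : b j₀ ≠ 0) :
    ((Fintype.piFinset fun _ : Fin r => Finset.Icc (1 : ℤ) m).filter
      (fun ψ => ∑ j, b j * ψ j = t)).card ≤ m ^ (r - 1) := by
  classical
  set T : Finset (Fin r → ℤ) :=
    Fintype.piFinset fun j : Fin r => if j = j₀ then {(1 : ℤ)} else Finset.Icc (1 : ℤ) m with hT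
  have hcardT : T.card = m ^ (r - 1) := by
    rw [hT, Fintype.card_piFinset]
    rw [← Finset.mul_prod_erase Finset.univ _ (Finset.mem_univ j₀)]
    rw [if_pos rfl, Finset.card_singleton, one_mul]
    rw [Finset.prod_congr rfl (fun j hj => by
      rw [if_neg (Finset.ne_of_mem_erase hj), icc_card])]
    rw [Finset.prod_const, Finset.card_erase_of_mem (Finset.mem_univ j₀), Finset.card_univ,
      Fintype.card_fin]
  rw [← hcardT]
  apply Finset.card_le_card_of_injOn (fun ψ => Function.update ψ j₀ 1)
  · intro ψ hψ
    rw [Finset.mem_coe, Finset.mem_filter, Fintype.mem_piFinset] at hψ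
    rw [hT, Finset.mem_coe, Fintype.mem_piFinset]
    intro j
    by_cases hj : j = j₀
    · subst hj; simp [Function.update_self]
    · simp [Function.update_of_ne hj, hj, hψ.1 j]
  · intro ψ hψ ψ' hψ' heq
    rw [Finset.coe_filter, Set.mem_setOf_eq] at hψ hψ'
    have hoff : ∀ j, j ≠ j₀ → ψ j = ψ' j := by
      intro j hj
      have := congrFun heq j
      simpa [Function.update_of_ne hj] using this
    funext j
    by_cases hj : j = j₀
    · subst hj
      have h1 : ∑ k, b k * ψ k = b j * ψ j + ∑ k ∈ Finset.univ.erase j, b k * ψ k :=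
        (Finset.add_sum_erase _ _ (Finset.mem_univ j)).symm
      have h2 : ∑ k, b k * ψ' k = b j * ψ' j + ∑ k ∈ Finset.univ.erase j, b k * ψ' k :=
        (Finset.add_sum_erase _ _ (Finset.mem_univ j)).symm
      have hsame : ∑ k ∈ Finset.univ.erase j, b k * ψ k
          = ∑ k ∈ Finset.univ.erase j, b k * ψ' k :=
        Finset.sum_congr rfl fun k hk => by
          rw [hoff k (Finset.ne_of_mem_erase hk)]
      have : b j * ψ j = b j * ψ' j := by
        have := hψ.2.trans hψ'.2.symm
        rw [h1, h2, hsame] at this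
        linarith
      exact mul_left_cancel₀ hb this
    · exact hoff j hj

/-- Key probabilistic detection lemma: if the multiset over `w` of color pairs
`(c(u,w), c(w,v))` differs from the multiset of pairs `(c(u',w), c(w,v'))`, then among all
pairs of substitutions `χ, ψ : Fin r → {1,…,m}`, at most `2·m^(2r-1)` of them make the
`(u,v)`- and `(u',v')`-entries of the matrix product `X[χ]·X[ψ]` coincide. -/
theorem probabilistic_detection (n r m : ℕ) (hn : 1 ≤ n) (hr : 1 ≤ r) (hm : 1 ≤ m)
    (c : Fin n × Fin n → Fin r) (u v u' v' : Fin n)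
    (hdiff : (Finset.univ.val.map fun w : Fin n => (c (u, w), c (w, v)))
      ≠ Finset.univ.val.map fun w : Fin n => (c (u', w), c (w, v'))) :
    (((Fintype.piFinset fun _ : Fin r => Finset.Icc (1 : ℤ) m) ×ˢ
        (Fintype.piFinset fun _ : Fin r => Finset.Icc (1 : ℤ) m)).filter
      (fun χψ : (Fin r → ℤ) × (Fin r → ℤ) =>
        ∑ w : Fin n, χψ.1 (c (u, w)) * χψ.2 (c (w, v))
          = ∑ w : Fin n, χψ.1 (c (u', w)) * χψ.2 (c (w, v')))).card
      ≤ 2 * m ^ (2 * r - 1) := by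
  classical
  set A : Finset (Fin r → ℤ) := Fintype.piFinset fun _ : Fin r => Finset.Icc (1 : ℤ) m with hA
  have hcardA : A.card = m ^ r := by
    rw [hA, Fintype.card_piFinset]
    simp [icc_card]
  set N₁ : Fin r × Fin r → ℕ :=
    fun p => (Finset.univ.filter fun w : Fin n => (c (u, w), c (w, v)) = p).card with hN₁
  set N₂ : Fin r × Fin r → ℕ :=
    fun p => (Finset.univ.filter fun w : Fin n => (c (u', w), c (w, v')) = p).card with hN₂
  have hcount : ∀ (f : Fin n → Fin r × Fin r) (p : Fin r × Fin r),
      Multiset.count p (Finset.univ.val.map f)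
        = (Finset.univ.filter fun w => f w = p).card := by
    intro f p
    rw [Multiset.count_map]
    rw [show (Finset.univ.filter fun w => f w = p).card
        = Multiset.card (Multiset.filter (fun w => f w = p) Finset.univ.val) from rfl]
    rw [Multiset.filter_congr (fun x _ => (eq_comm : f x = p ↔ p = f x))]
  -- some coefficient differs
  have hex : ∃ p : Fin r × Fin r, N₁ p ≠ N₂ p := by
    by_contra h
    push_neg at h
    exact hdiff (Multiset.ext.2 fun p => by rw [hcount, hcount]; exact h p)
  obtain ⟨p₀, hp₀⟩ := hex
  set a : Fin r × Fin r → ℤ := fun p => (N₁ p : ℤ) - (N₂ p : ℤ) with ha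
  have ha₀ : a p₀ ≠ 0 := by
    rw [ha]
    simpa [sub_eq_zero] using hp₀
  set f : (Fin r → ℤ) → Fin r → ℤ := fun ψ i => ∑ j, a (i, j) * ψ j with hf
  -- rewrite the sums fiberwise
  have key : ∀ (χ ψ : Fin r → ℤ) (x y : Fin n),
      ∑ w : Fin n, χ (c (x, w)) * ψ (c (w, y))
        = ∑ p : Fin r × Fin r,
            ((Finset.univ.filter fun w : Fin n => (c (x, w), c (w, y)) = p).card : ℤ)
              * (χ p.1 * ψ p.2) := by
    intro χ ψ x y
    rw [← Finset.sum_fiberwise' Finset.univ (fun w => (c (x, w), c (w, y)))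
      (fun p => χ p.1 * ψ p.2)]
    refine Finset.sum_congr rfl fun p _ => ?_
    rw [Finset.sum_const, nsmul_eq_mul]
  have hiff : ∀ χ ψ : Fin r → ℤ,
      ((∑ w : Fin n, χ (c (u, w)) * ψ (c (w, v))
          = ∑ w : Fin n, χ (c (u', w)) * ψ (c (w, v'))))
        ↔ ∑ i, f ψ i * χ i = 0 := by
    intro χ ψ
    have h0 : ∑ i, f ψ i * χ i
        = ∑ p : Fin r × Fin r, ((N₁ p : ℤ)) * (χ p.1 * ψ p.2)
          - ∑ p : Fin r × Fin r, ((N₂ p : ℤ)) * (χ p.1 * ψ p.2) := by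
      rw [← Finset.sum_sub_distrib, Fintype.sum_prod_type]
      refine Finset.sum_congr rfl fun i _ => ?_
      simp only [hf]
      rw [Finset.sum_mul]
      refine Finset.sum_congr rfl fun j _ => ?_
      simp only [ha]
      ring
    rw [key χ ψ u v, key χ ψ u' v', h0, sub_eq_zero]
  -- split the solution set
  set B₀ : Finset (Fin r → ℤ) := A.filter (fun ψ => f ψ p₀.1 = 0) with hB₀
  set B₁ : Finset (Fin r → ℤ) := A.filter (fun ψ => f ψ p₀.1 ≠ 0) with hB₁
  set S := ((A ×ˢ A).filter
      (fun χψ : (Fin r → ℤ) × (Fin r → ℤ) =>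
        ∑ w : Fin n, χψ.1 (c (u, w)) * χψ.2 (c (w, v))
          = ∑ w : Fin n, χψ.1 (c (u', w)) * χψ.2 (c (w, v')))) with hS
  set T := ((A ×ˢ B₁).filter
      (fun χψ : (Fin r → ℤ) × (Fin r → ℤ) =>
        ∑ w : Fin n, χψ.1 (c (u, w)) * χψ.2 (c (w, v))
          = ∑ w : Fin n, χψ.1 (c (u', w)) * χψ.2 (c (w, v')))) with hT
  have hsub : S ⊆ (A ×ˢ B₀) ∪ T := by
    intro χψ hx
    rw [hS, Finset.mem_filter, Finset.mem_product] at hx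
    by_cases hz : f χψ.2 p₀.1 = 0
    · exact Finset.mem_union_left _ (Finset.mem_product.2
        ⟨hx.1.1, Finset.mem_filter.2 ⟨hx.1.2, hz⟩⟩)
    · exact Finset.mem_union_right _ (Finset.mem_filter.2
        ⟨Finset.mem_product.2 ⟨hx.1.1, Finset.mem_filter.2 ⟨hx.1.2, hz⟩⟩, hx.2⟩)
  -- count B₀
  have hB₀card : B₀.card ≤ m ^ (r - 1) := by
    have := lin_count r m (fun j => a (p₀.1, j)) 0 p₀.2 (by simpa using ha₀)
    refine le_trans (Finset.card_le_card ?_) this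
    intro ψ hψ
    rw [hB₀, Finset.mem_filter] at hψ
    exact Finset.mem_filter.2 ⟨hψ.1, hψ.2⟩
  -- count T
  have hTcard : T.card ≤ m ^ r * m ^ (r - 1) := by
    have hfib : T.card = ∑ ψ ∈ B₁, (T.filter fun χψ => χψ.2 = ψ).card := by
      apply Finset.card_eq_sum_card_fiberwise
      intro x hx
      rw [hT, Finset.mem_coe, Finset.mem_filter, Finset.mem_product] at hx
      exact hx.1.2
    rw [hfib]
    calc ∑ ψ ∈ B₁, (T.filter fun χψ => χψ.2 = ψ).card
        ≤ ∑ _ψ ∈ B₁, m ^ (r - 1) := by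
          refine Finset.sum_le_sum fun ψ hψ => ?_
          rw [hB₁, Finset.mem_filter] at hψ
          have hlin := lin_count r m (f ψ) 0 p₀.1 hψ.2
          refine le_trans (Finset.card_le_card_of_injOn (fun χψ => χψ.1) ?_ ?_) hlin
          · intro x hx
            rw [Finset.mem_coe, Finset.mem_filter, hT, Finset.mem_filter, Finset.mem_product] at hx
            obtain ⟨⟨⟨hx1, _⟩, heq⟩, hx2⟩ := hx
            refine Finset.mem_filter.2 ⟨hx1, ?_⟩
            have := (hiff x.1 x.2).1 heq
            rwa [hx2] at this
          · intro x hx y hy hxy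
            simp only [Finset.coe_filter, Set.mem_setOf_eq] at hx hy
            exact Prod.ext hxy (hx.2.trans hy.2.symm)
      _ = B₁.card * m ^ (r - 1) := by rw [Finset.sum_const, smul_eq_mul]
      _ ≤ m ^ r * m ^ (r - 1) := by
          refine Nat.mul_le_mul_right _ ?_
          rw [← hcardA]
          exact Finset.card_le_card (Finset.filter_subset _ _)
  calc S.card ≤ ((A ×ˢ B₀) ∪ T).card := Finset.card_le_card hsub
    _ ≤ (A ×ˢ B₀).card + T.card := Finset.card_union_le _ _
    _ ≤ m ^ r * m ^ (r - 1) + m ^ r * m ^ (r - 1) := by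
        refine Nat.add_le_add ?_ hTcard
        rw [Finset.card_product, hcardA]
        exact Nat.mul_le_mul_left _ hB₀card
    _ = 2 * m ^ (2 * r - 1) := by
        have hrr : r + (r - 1) = 2 * r - 1 := by omega
        rw [← pow_add, hrr]
        ring
end
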